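/- Let k ≥ 0, let φ : ℝ³ → ℂ³ be σ-integrable on ∂D = ∂B₁ ∪ ∂B₂, and let x ∈ ℝ³ ∖ (∂B₁ ∪ ∂B₂), so that the kernel y ↦ G^k(x−y) is smooth and bounded on ∂D. Then ⟨ν₁(x), ∫_{∂D} G^k(x−y) × φ(y) dσ(y)⟩ = ⟨ν₂(−x), ∫_{∂D} G^k(−x−y) × φ(−y) dσ(y)⟩; that is, writing ∇×A_D^k[φ](x) = ∫_{∂D} G^k(x−y) × φ(y) dσ(y) and φ̃(ỹ) := φ(−ỹ), one has ν₁(x)·(∇×A_D^k[φ])(x) = ν₂(−x)·(∇×A_D^k[φ̃])(−x). -/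

import Mathlib

open MeasureTheory

/-- Coercion `ℝ³ ↪ ℂ³` (componentwise). -/
noncomputable def toC3 (x : EuclideanSpace ℝ (Fin 3)) : EuclideanSpace ℂ (Fin 3) :=
  (WithLp.equiv 2 (Fin 3 → ℂ)).symm fun i => (x i : ℂ)

/-- Bilinear pairing of a real vector with a `ℂ³` vector. -/
noncomputable def pairRC (a : EuclideanSpace ℝ (Fin 3)) (b : EuclideanSpace ℂ (Fin 3)) : ℂ :=
  ∑ i, (a i : ℂ) * b i

/-- Three-dimensional cross product over `ℂ`. -/
noncomputable def crossC (a b : EuclideanSpace ℂ (Fin 3)) : EuclideanSpace ℂ (Fin 3) :=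
  (WithLp.equiv 2 (Fin 3 → ℂ)).symm
    ![a 1 * b 2 - a 2 * b 1, a 2 * b 0 - a 0 * b 2, a 0 * b 1 - a 1 * b 0]

/-- The gradient kernel `G^k(z) = ∇Γ^k(z) = e^{ik|z|}(1 - ik|z|)·z/(4π|z|³) ∈ ℂ³`. -/
noncomputable def gradHelmholtzFundamental (k : ℝ) (z : EuclideanSpace ℝ (Fin 3)) :
    EuclideanSpace ℂ (Fin 3) :=
  (WithLp.equiv 2 (Fin 3 → ℂ)).symm fun i =>
    Complex.exp (Complex.I * k * ‖z‖) * (1 - Complex.I * k * ‖z‖) * (z i)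
      / (4 * Real.pi * ‖z‖ ^ 3)

/-- Center of the first ball: `c₁ = (-r - ε/2, 0, 0)`. -/
noncomputable def ctr1 (r ε : ℝ) : EuclideanSpace ℝ (Fin 3) :=
  (WithLp.equiv 2 (Fin 3 → ℝ)).symm ![-r - ε / 2, 0, 0]

/-- Center of the second ball: `c₂ = (r + ε/2, 0, 0)`. -/
noncomputable def ctr2 (r ε : ℝ) : EuclideanSpace ℝ (Fin 3) :=
  (WithLp.equiv 2 (Fin 3 → ℝ)).symm ![r + ε / 2, 0, 0]

/-- Outward unit normal on `∂B₁`: `ν₁(x) = (x - c₁)/r`. -/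
noncomputable def nu1 (r ε : ℝ) (x : EuclideanSpace ℝ (Fin 3)) : EuclideanSpace ℝ (Fin 3) :=
  r⁻¹ • (x - ctr1 r ε)

/-- Outward unit normal on `∂B₂`: `ν₂(x) = (x - c₂)/r`. -/
noncomputable def nu2 (r ε : ℝ) (x : EuclideanSpace ℝ (Fin 3)) : EuclideanSpace ℝ (Fin 3) :=
  r⁻¹ • (x - ctr2 r ε)

noncomputable def negE : (EuclideanSpace ℝ (Fin 3)) ≃ᵢ (EuclideanSpace ℝ (Fin 3)) :=
  (LinearIsometryEquiv.neg ℝ).toIsometryEquiv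

lemma grad_neg (k : ℝ) (z : EuclideanSpace ℝ (Fin 3)) :
    gradHelmholtzFundamental k (-z) = - gradHelmholtzFundamental k z := by
  ext i
  simp only [gradHelmholtzFundamental, WithLp.equiv_symm_apply, PiLp.toLp_apply, PiLp.neg_apply, norm_neg,
    Complex.ofReal_neg]
  ring

lemma crossC_neg_left (a b : EuclideanSpace ℂ (Fin 3)) :
    crossC (-a) b = -(crossC a b) := by
  ext i
  fin_cases i <;>
    simp [crossC, PiLp.neg_apply] <;> ring

lemma pairRC_neg_neg (a : EuclideanSpace ℝ (Fin 3)) (b : EuclideanSpace ℂ (Fin 3)) :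
    pairRC (-a) (-b) = pairRC a b := by
  unfold pairRC
  refine Finset.sum_congr rfl fun i _ => ?_
  simp [PiLp.neg_apply]

lemma ctr2_eq_neg_ctr1 (r ε : ℝ) : ctr2 r ε = -(ctr1 r ε) := by
  ext i
  fin_cases i <;> simp [ctr1, ctr2] <;> ring

lemma nu2_neg (r ε : ℝ) (x : EuclideanSpace ℝ (Fin 3)) :
    nu2 r ε (-x) = -(nu1 r ε x) := by
  unfold nu1 nu2
  rw [ctr2_eq_neg_ctr1, ← smul_neg]
  congr 1
  abel

lemma neg_preimage_sphere (c : EuclideanSpace ℝ (Fin 3)) (r : ℝ) :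
    (fun y : EuclideanSpace ℝ (Fin 3) => -y) ⁻¹' Metric.sphere c r = Metric.sphere (-c) r := by
  ext y
  simp only [Set.mem_preimage, Metric.mem_sphere]
  rw [show dist (-y) c = dist y (-c) by rw [← dist_neg_neg, neg_neg]]

/-- For `x` off `∂D` and `φ̃(ỹ) := φ(-ỹ)`, the curl of the single layer potential
satisfies `ν₁(x)·(∇×A_D^k[φ])(x) = ν₂(-x)·(∇×A_D^k[φ̃])(-x)`. -/
theorem stmt_6 (r ε : ℝ) (hr : 0 < r) (hε : 0 < ε) (k : ℝ) (hk : 0 ≤ k)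
    (φ : EuclideanSpace ℝ (Fin 3) → EuclideanSpace ℂ (Fin 3))
    (hφ : IntegrableOn φ (Metric.sphere (ctr1 r ε) r ∪ Metric.sphere (ctr2 r ε) r) μH[2])
    (x : EuclideanSpace ℝ (Fin 3))
    (hx : x ∉ Metric.sphere (ctr1 r ε) r ∪ Metric.sphere (ctr2 r ε) r) :
    pairRC (nu1 r ε x)
        (∫ y in Metric.sphere (ctr1 r ε) r ∪ Metric.sphere (ctr2 r ε) r,
          crossC (gradHelmholtzFundamental k (x - y)) (φ y) ∂μH[2])
      = pairRC (nu2 r ε (-x))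
          (∫ y in Metric.sphere (ctr1 r ε) r ∪ Metric.sphere (ctr2 r ε) r,
            crossC (gradHelmholtzFundamental k (-x - y)) (φ (-y)) ∂μH[2]) := by
  set S := Metric.sphere (ctr1 r ε) r ∪ Metric.sphere (ctr2 r ε) r with hS
  have hpre : (fun y : EuclideanSpace ℝ (Fin 3) => -y) ⁻¹' S = S := by
    rw [hS, Set.preimage_union, neg_preimage_sphere, neg_preimage_sphere,
      ← ctr2_eq_neg_ctr1, ctr2_eq_neg_ctr1 r ε, neg_neg, Set.union_comm]
  have key : (∫ y in S, crossC (gradHelmholtzFundamental k (-x - y)) (φ (-y)) ∂μH[2])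
      = - ∫ y in S, crossC (gradHelmholtzFundamental k (x - y)) (φ y) ∂μH[2] := by
    have h1 := (negE.measurePreserving_hausdorffMeasure 2).setIntegral_preimage_emb
      negE.toHomeomorph.measurableEmbedding
      (fun y => crossC (gradHelmholtzFundamental k (-x - y)) (φ (-y))) S
    rw [← h1]
    have hfun : (fun z => crossC (gradHelmholtzFundamental k (-x - negE z)) (φ (-(negE z))))
        = fun z => -(crossC (gradHelmholtzFundamental k (x - z)) (φ z)) := by
      funext z
      have hz : negE z = -z := rfl
      rw [hz, neg_neg, show -x - -z = -(x - z) by abel, grad_neg, crossC_neg_left]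
    have hpre' : negE ⁻¹' S = S := hpre
    rw [hpre', show (fun z => crossC (gradHelmholtzFundamental k (-x - negE z)) (φ (-(negE z))))
      = fun z => -(crossC (gradHelmholtzFundamental k (x - z)) (φ z)) from hfun, integral_neg]
  rw [key, nu2_neg, ← neg_neg (∫ y in S,
    crossC (gradHelmholtzFundamental k (x - y)) (φ y) ∂μH[2]), pairRC_neg_neg]
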